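/- In the quadratic space ℚ³⁰ with bilinear form given by the intersection matrix M of the curves E_{ij}^β (diagonal −3; entry 1 when the index pairs are disjoint; 0 otherwise), fix indices 1 ≤ j < r < s < t ≤ 5 and let D = B_{jr} + B_{st}, where B_{ab} = Σ_{β} v_{ab}^β is the sum of the three basis vectors with index pair {a,b}. Then ⟨D, D⟩ = 0 and ⟨Σ, D⟩ = 36 where Σ is the sum of all 30 basis vectors; consequently, taking K = Σ/2, the arithmetic genus 1 + (D² + K·D)/2 equals 10. -/

import Mathlib

open Finset

/-- Index set for the 30 elliptic curves `E_{ij}^β`: a pair `i < j` in `Fin 5`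
together with `β ∈ μ₃` encoded as `ZMod 3`. -/
abbrev Idx : Type := {p : Fin 5 × Fin 5 // p.1 < p.2} × ZMod 3

/-- The 30×30 intersection matrix of the curves `E_{ij}^β`: `−3` on the diagonal,
`1` between indices with disjoint pairs `{i,j} ∩ {s,t} = ∅`, and `0` otherwise. -/
def M : Matrix Idx Idx ℚ := fun x y =>
  if x = y then -3
  else if x.1.1.1 ≠ y.1.1.1 ∧ x.1.1.1 ≠ y.1.1.2 ∧ x.1.1.2 ≠ y.1.1.1 ∧ x.1.1.2 ≠ y.1.1.2
  then 1 else 0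

/-- The pairing given by the intersection matrix `M`. -/
def pair (x y : Idx → ℚ) : ℚ := dotProduct x (M.mulVec y)

/-- `B_{ij} = v_{ij}^0 + v_{ij}^1 + v_{ij}^2`. -/
def B (i j : Fin 5) (h : i < j) : Idx → ℚ := ∑ β : ZMod 3, Pi.single (⟨⟨(i, j), h⟩, β⟩ : Idx) (1 : ℚ)

/-- The sum `Σ` of all 30 basis vectors. -/
def Sig : Idx → ℚ := ∑ x : Idx, Pi.single x 1

lemma pair_single (a b : Idx) : pair (Pi.single a 1) (Pi.single b 1) = M a b := by
  simp [pair, Matrix.mulVec, dotProduct, Pi.single_apply]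

lemma pair_add_left (x y z : Idx → ℚ) : pair (x + y) z = pair x z + pair y z := by
  simp [pair, add_dotProduct]

lemma pair_add_right (x y z : Idx → ℚ) : pair x (y + z) = pair x y + pair x z := by
  simp [pair, Matrix.mulVec_add, dotProduct_add]

lemma pair_smul_left (c : ℚ) (x y : Idx → ℚ) : pair (c • x) y = c * pair x y := by
  simp [pair, smul_dotProduct]

lemma hB (i j : Fin 5) (h : i < j) : B i j h =
    Pi.single (⟨⟨(i,j),h⟩,0⟩ : Idx) 1 + Pi.single (⟨⟨(i,j),h⟩,1⟩ : Idx) 1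
      + Pi.single (⟨⟨(i,j),h⟩,2⟩ : Idx) 1 := by
  have hu : (Finset.univ : Finset (ZMod 3)) = {0,1,2} := by decide
  rw [B, hu]
  rw [show ({0,1,2} : Finset (ZMod 3)) = insert 0 (insert 1 {2}) from rfl]
  rw [Finset.sum_insert (by decide), Finset.sum_insert (by decide), Finset.sum_singleton, add_assoc]

/-- Integer version of `M`, for decidable computations. -/
def MZ : Matrix Idx Idx ℤ := fun x y =>
  if x = y then -3
  else if x.1.1.1 ≠ y.1.1.1 ∧ x.1.1.1 ≠ y.1.1.2 ∧ x.1.1.2 ≠ y.1.1.1 ∧ x.1.1.2 ≠ y.1.1.2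
  then 1 else 0

lemma MZcol : ∀ y : Idx, ∑ x : Idx, MZ x y = 6 := by decide

lemma Mcol (y : Idx) : ∑ x : Idx, M x y = 6 := by
  have h : ∀ x, M x y = (MZ x y : ℚ) := by
    intro x; simp [M, MZ, apply_ite (fun z : ℤ => (z : ℚ))]
  simp only [h]
  rw [← Int.cast_sum, MZcol]; norm_num

lemma Sig_one : Sig = fun _ => 1 := by
  funext y; simp [Sig, Finset.sum_apply, Pi.single_apply]

lemma pair_Sig_single (b : Idx) : pair Sig (Pi.single b 1) = 6 := by
  rw [Sig_one]
  simp [pair, Matrix.mulVec, dotProduct, Pi.single_apply]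
  exact Mcol b

lemma Mself (i j : Fin 5) (h : i < j) (β γ : ZMod 3) :
    M (⟨⟨(i,j),h⟩,β⟩ : Idx) (⟨⟨(i,j),h⟩,γ⟩ : Idx) = if β = γ then -3 else 0 := by
  by_cases hbg : β = γ
  · simp [M, hbg]
  · simp [M, Prod.ext_iff, hbg]

lemma Mcross (a b c d : Fin 5) (h : a < b) (h' : c < d) (β γ : ZMod 3)
    (hac : a ≠ c) (had : a ≠ d) (hbc : b ≠ c) (hbd : b ≠ d) :
    M (⟨⟨(a,b),h⟩,β⟩ : Idx) (⟨⟨(c,d),h'⟩,γ⟩ : Idx) = 1 := by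
  simp [M, Prod.ext_iff, Subtype.ext_iff, hac, had, hbc, hbd]

/-- For `j < r < s < t` and `D = B_{jr} + B_{st}`: `⟨D,D⟩ = 0`, `⟨Σ,D⟩ = 36`, and with
`K = Σ/2` the arithmetic genus `1 + (D² + K·D)/2` equals `10`. -/
theorem stmt_11 (j r s t : Fin 5) (h1 : j < r) (h2 : r < s) (h3 : s < t) :
    let D : Idx → ℚ := B j r h1 + B s t h3
    pair D D = 0 ∧ pair Sig D = 36 ∧
      1 + (pair D D + pair ((2 : ℚ)⁻¹ • Sig) D) / 2 = 10 := by
  intro D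
  have hjs : j ≠ s := (h1.trans h2).ne
  have hjt : j ≠ t := ((h1.trans h2).trans h3).ne
  have hrs : r ≠ s := h2.ne
  have hrt : r ≠ t := (h2.trans h3).ne
  have hsj : s ≠ j := hjs.symm
  have htj : t ≠ j := hjt.symm
  have hsr : s ≠ r := hrs.symm
  have htr : t ≠ r := hrt.symm
  have hDD : pair D D = 0 := by
    simp only [D, hB, pair_add_left, pair_add_right, pair_single,
      Mself, Mcross j r s t h1 h3 _ _ hjs hjt hrs hrt,
      Mcross s t j r h3 h1 _ _ hsj hsr htj htr]
    norm_num [(by decide : (2:ZMod 3) ≠ 0), (by decide : (2:ZMod 3) ≠ 1),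
      (by decide : (0:ZMod 3) ≠ 2), (by decide : (1:ZMod 3) ≠ 2),
      (by decide : (0:ZMod 3) ≠ 1), (by decide : (1:ZMod 3) ≠ 0)]
  have hSD : pair Sig D = 36 := by
    simp only [D, hB, pair_add_right, pair_Sig_single]
    norm_num
  refine ⟨hDD, hSD, ?_⟩
  rw [hDD, pair_smul_left, hSD]
  norm_num
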